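/- If (p_{j,r}) ∈ {0,1}^{[n]×[n]}, then γ' = (2/(n-1)) Σ_{(r,s) distinct} ( p̄_{·,r} − (1/n) Σ_j p_{j,r} p_{j,s} )( p̄_{·,s} − (1/n) Σ_j p_{j,r} p_{j,s} ), where γ' = (2/(n²(n-1))) Σ_{(j,k) distinct} Σ_{(r,s) distinct} (p_{j,r}-p_{j,s})_+ (p_{k,s}-p_{k,r})_+ and p̄_{·,r} = (1/n) Σ_j p_{j,r}. -/

import Mathlib

open Finset

theorem gamma'_eq_of_zero_one (n : ℕ) (hn : 2 ≤ n) (p : Fin n → Fin n → ℝ)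
    (hp01 : ∀ j r, p j r = 0 ∨ p j r = 1) :
    (2 / ((n:ℝ)^2 * ((n:ℝ) - 1))) *
      ∑ j : Fin n, ∑ k : Fin n, ∑ r : Fin n, ∑ s : Fin n,
        (if j ≠ k ∧ r ≠ s then max 0 (p j r - p j s) * max 0 (p k s - p k r) else 0)
    = (2 / ((n:ℝ) - 1)) *
      ∑ r : Fin n, ∑ s : Fin n,
        (if r ≠ s then
          ((n:ℝ)⁻¹ * ∑ j : Fin n, p j r - (n:ℝ)⁻¹ * ∑ j : Fin n, p j r * p j s) *
          ((n:ℝ)⁻¹ * ∑ j : Fin n, p j s - (n:ℝ)⁻¹ * ∑ j : Fin n, p j r * p j s)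
         else 0) := by
  have hn0 : (n:ℝ) ≠ 0 := by
    have : (0:ℝ) < n := by exact_mod_cast Nat.lt_of_lt_of_le (by norm_num) hn
    exact ne_of_gt this
  -- termwise rewrite
  have key : ∀ j k r s : Fin n,
      (if j ≠ k ∧ r ≠ s then max 0 (p j r - p j s) * max 0 (p k s - p k r) else 0)
      = (if r ≠ s then (p j r - p j r * p j s) * (p k s - p k r * p k s) else 0) := by
    intro j k r s
    by_cases hrs : r ≠ s
    · by_cases hjk : j ≠ k
      · rw [if_pos ⟨hjk, hrs⟩, if_pos hrs]
        rcases hp01 j r with h1 | h1 <;> rcases hp01 j s with h2 | h2 <;>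
          rcases hp01 k r with h3 | h3 <;> rcases hp01 k s with h4 | h4 <;>
          norm_num [h1, h2, h3, h4]
      · push_neg at hjk
        subst hjk
        rw [if_neg (by simp), if_pos hrs]
        rcases hp01 j r with h1 | h1 <;> rcases hp01 j s with h2 | h2 <;>
          norm_num [h1, h2]
    · simp [hrs]
  simp only [key]
  -- reorder the quadruple sum
  have swap : ∀ f : Fin n → Fin n → Fin n → Fin n → ℝ,
      ∑ j : Fin n, ∑ k : Fin n, ∑ r : Fin n, ∑ s : Fin n, f j k r s
      = ∑ r : Fin n, ∑ s : Fin n, ∑ j : Fin n, ∑ k : Fin n, f j k r s := by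
    intro f
    calc ∑ j : Fin n, ∑ k : Fin n, ∑ r : Fin n, ∑ s : Fin n, f j k r s
        = ∑ j : Fin n, ∑ r : Fin n, ∑ k : Fin n, ∑ s : Fin n, f j k r s :=
          Finset.sum_congr rfl fun j _ => Finset.sum_comm
      _ = ∑ r : Fin n, ∑ j : Fin n, ∑ k : Fin n, ∑ s : Fin n, f j k r s :=
          Finset.sum_comm
      _ = ∑ r : Fin n, ∑ j : Fin n, ∑ s : Fin n, ∑ k : Fin n, f j k r s :=
          Finset.sum_congr rfl fun r _ => Finset.sum_congr rfl fun j _ =>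
            Finset.sum_comm
      _ = ∑ r : Fin n, ∑ s : Fin n, ∑ j : Fin n, ∑ k : Fin n, f j k r s :=
          Finset.sum_congr rfl fun r _ => Finset.sum_comm
  rw [swap]
  -- factor inner double sum
  have factor : ∀ r s : Fin n,
      (∑ j : Fin n, ∑ k : Fin n,
        (if r ≠ s then (p j r - p j r * p j s) * (p k s - p k r * p k s) else 0))
      = (if r ≠ s then
          (∑ j : Fin n, (p j r - p j r * p j s)) * (∑ k : Fin n, (p k s - p k r * p k s))
         else 0) := by
    intro r s
    by_cases hrs : r ≠ s
    · simp only [if_pos hrs]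
      rw [Finset.sum_mul_sum]
    · simp [hrs]
  simp only [factor]
  rw [Finset.mul_sum, Finset.mul_sum]
  refine Finset.sum_congr rfl fun r _ => ?_
  rw [Finset.mul_sum, Finset.mul_sum]
  refine Finset.sum_congr rfl fun s _ => ?_
  by_cases hrs : r ≠ s
  · rw [if_pos hrs, if_pos hrs, Finset.sum_sub_distrib, Finset.sum_sub_distrib]
    by_cases hn1 : (n:ℝ) - 1 = 0
    · simp [hn1]
    · field_simp [hn0]
  · simp [hrs]
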